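/- For every n ∈ ℕ, every θ with 0 ≤ θ ≤ 1/2, and every s with s − θ ≥ 1/(2n+3) and s ≤ 1/2, one has | cos((2n+3)πs)/(2(2n+3)π·sin(πs)) − cos((2n+3)π(s−θ))/(2(2n+3)π·sin(π(s−θ))) | ≤ (3/2)·θ/(s−θ). -/

import Mathlib

lemma sin_lipschitz' (x y : ℝ) : |Real.sin x - Real.sin y| ≤ |x - y| := by
  rw [Real.sin_sub_sin, abs_mul, abs_mul, abs_two]
  have h1 : |Real.sin ((x - y) / 2)| ≤ |x - y| / 2 := by
    simpa [abs_div] using (Real.abs_sin_le_abs (x := (x - y)/2))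
  have h2 : |Real.cos ((x + y) / 2)| ≤ 1 := Real.abs_cos_le_one _
  nlinarith [abs_nonneg (Real.sin ((x-y)/2)), abs_nonneg (Real.cos ((x+y)/2)), abs_nonneg (x-y)]

lemma cos_lipschitz' (x y : ℝ) : |Real.cos x - Real.cos y| ≤ |x - y| := by
  rw [Real.cos_sub_cos, abs_mul, abs_mul, abs_neg, abs_two]
  have h1 : |Real.sin ((x - y) / 2)| ≤ |x - y| / 2 := by
    simpa [abs_div] using (Real.abs_sin_le_abs (x := (x - y)/2))
  have h2 : |Real.sin ((x + y) / 2)| ≤ 1 := Real.abs_sin_le_one _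
  nlinarith [abs_nonneg (Real.sin ((x-y)/2)), abs_nonneg (Real.sin ((x+y)/2)), abs_nonneg (x-y)]

set_option maxHeartbeats 800000 in
/-- Bound on the boundary terms of the integration by parts:
`|cos((2n+3)πs)/(2(2n+3)π sin(πs)) − cos((2n+3)π(s−θ))/(2(2n+3)π sin(π(s−θ)))| ≤ (3/2)θ/(s−θ)`
for `0 ≤ θ ≤ 1/2`, `s − θ ≥ 1/(2n+3)` and `s ≤ 1/2`. -/
theorem boundary_term_bound (n : ℕ) (s θ : ℝ)
    (hθ1 : 0 ≤ θ) (hθ2 : θ ≤ 1 / 2)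
    (h1 : 1 / (2 * (n : ℝ) + 3) ≤ s - θ) (h2 : s ≤ 1 / 2) :
    |Real.cos ((2 * (n : ℝ) + 3) * Real.pi * s) /
          (2 * (2 * (n : ℝ) + 3) * Real.pi * Real.sin (Real.pi * s)) -
        Real.cos ((2 * (n : ℝ) + 3) * Real.pi * (s - θ)) /
          (2 * (2 * (n : ℝ) + 3) * Real.pi * Real.sin (Real.pi * (s - θ)))| ≤
      (3 / 2) * θ / (s - θ) := by
  have hπ : 0 < Real.pi := Real.pi_pos
  have hπ3 : 3 < Real.pi := Real.pi_gt_three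
  set N : ℝ := 2 * (n : ℝ) + 3 with hNdef
  have hn : (0:ℝ) ≤ (n:ℝ) := n.cast_nonneg
  have hN3 : (3:ℝ) ≤ N := by simp only [hNdef]; linarith
  have hN0 : (0:ℝ) < N := by linarith
  have hb0 : 0 < s - θ := lt_of_lt_of_le (by positivity) h1
  have hs0 : 0 < s := by linarith
  have hb2 : s - θ ≤ 1 / 2 := by linarith
  have hNs : 1 ≤ N * s := by
    rw [div_le_iff₀ hN0] at h1
    nlinarith
  have sinlb : ∀ x : ℝ, 0 < x → x ≤ 1 / 2 → 2 * x ≤ Real.sin (Real.pi * x) := by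
    intro x hx hx2
    have hle : Real.pi * x ≤ Real.pi / 2 := by nlinarith
    have h := Real.mul_le_sin (x := Real.pi * x) (by positivity) hle
    have he : 2 / Real.pi * (Real.pi * x) = 2 * x := by field_simp
    linarith [he ▸ h]
  have sin1 : 2 * s ≤ Real.sin (Real.pi * s) := sinlb s hs0 h2
  have sin2 : 2 * (s - θ) ≤ Real.sin (Real.pi * (s - θ)) := sinlb _ hb0 hb2
  have sin1p : 0 < Real.sin (Real.pi * s) := by linarith
  have sin2p : 0 < Real.sin (Real.pi * (s - θ)) := by linarith
  set A := Real.cos (N * Real.pi * s) with hA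
  set B := Real.cos (N * Real.pi * (s - θ)) with hB
  set S := Real.sin (Real.pi * s) with hS
  set T := Real.sin (Real.pi * (s - θ)) with hT
  have hcosd : |A - B| ≤ N * Real.pi * θ := by
    have h := cos_lipschitz' (N * Real.pi * s) (N * Real.pi * (s - θ))
    have he : |N * Real.pi * s - N * Real.pi * (s - θ)| = N * Real.pi * θ := by
      rw [show N * Real.pi * s - N * Real.pi * (s - θ) = N * Real.pi * θ by ring]
      exact abs_of_nonneg (by positivity)
    exact he ▸ h
  have hsind : |T - S| ≤ Real.pi * θ := by
    have h := sin_lipschitz' (Real.pi * (s - θ)) (Real.pi * s)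
    have he : |Real.pi * (s - θ) - Real.pi * s| = Real.pi * θ := by
      rw [show Real.pi * (s - θ) - Real.pi * s = -(Real.pi * θ) by ring, abs_neg]
      exact abs_of_nonneg (by positivity)
    exact he ▸ h
  have hTle : |T| ≤ Real.pi * s := by
    calc |T| ≤ |Real.pi * (s - θ)| := Real.abs_sin_le_abs
      _ = Real.pi * (s - θ) := abs_of_pos (by positivity)
      _ ≤ Real.pi * s := by nlinarith
  have hBle : |B| ≤ 1 := Real.abs_cos_le_one _
  have hNπs : 1 ≤ N * Real.pi * s := by nlinarith
  have key : |A * T - B * S| ≤ 2 * N * Real.pi ^ 2 * s * θ := by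
    have e : A * T - B * S = (A - B) * T + B * (T - S) := by ring
    rw [e]
    calc |(A - B) * T + B * (T - S)| ≤ |(A - B) * T| + |B * (T - S)| := abs_add_le _ _
      _ = |A - B| * |T| + |B| * |T - S| := by rw [abs_mul, abs_mul]
      _ ≤ (N * Real.pi * θ) * (Real.pi * s) + 1 * (Real.pi * θ) := by
          gcongr <;> positivity
      _ ≤ 2 * N * Real.pi ^ 2 * s * θ := by
          nlinarith [mul_nonneg (mul_nonneg hπ.le hθ1) (sub_nonneg.mpr hNπs)]
  have heq : A / (2 * N * Real.pi * S) - B / (2 * N * Real.pi * T)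
      = (A * T - B * S) / (2 * N * Real.pi * S * T) := by
    rw [div_sub_div _ _ (by positivity) (by positivity)]
    rw [div_eq_div_iff (by positivity) (by positivity)]
    ring
  rw [heq, abs_div, abs_of_pos (by positivity : (0:ℝ) < 2 * N * Real.pi * S * T)]
  rw [div_le_div_iff₀ (by positivity) hb0]
  have hST : (2 * s) * (2 * (s - θ)) ≤ S * T :=
    mul_le_mul sin1 sin2 (by linarith) (by linarith)
  have hden : 8 * N * Real.pi * s * (s - θ) ≤ 2 * N * Real.pi * S * T := by
    nlinarith [mul_le_mul_of_nonneg_left hST (by positivity : (0:ℝ) ≤ 2 * N * Real.pi)]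
  have hpos : (0:ℝ) ≤ 2 * N * Real.pi * s * θ * (s - θ) := by positivity
  nlinarith [mul_le_mul_of_nonneg_right key hb0.le,
    mul_le_mul_of_nonneg_left hden (by positivity : (0:ℝ) ≤ 3 / 2 * θ),
    mul_le_mul_of_nonneg_left Real.pi_le_four hpos]
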